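/- arXiv:0711.5007 — 2 statements merged into one kernel-verified Lean document; each statement's English description precedes it below -/
import Mathlib

section
/- Let p be a prime and let G be a finite p-group that is not elementary abelian. Then G contains a central subgroup C of order p that is not a direct factor of G; that is, there is no normal subgroup K of G with K ∩ C = 1 and K·C = G. -/
open scoped Pointwise commutatorElement

/-- A group is elementary abelian for the prime `p` if it is abelian and every element has
order dividing `p`. -/
def IsElementaryAbelian (p : ℕ) (G : Type) [Group G] : Prop :=
  (∀ a b : G, a * b = b * a) ∧ ∀ g : G, g ^ p = 1

/-- A subgroup contained in the center is normal. -/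
lemma aux_normal_of_le_center {G : Type} [Group G] {C : Subgroup G}
    (h : C ≤ Subgroup.center G) : C.Normal := by
  refine ⟨fun n hn g => ?_⟩
  have hc : g * n = n * g := Subgroup.mem_center_iff.mp (h hn) g
  have he : g * n * g⁻¹ = n := by rw [hc]; group
  rw [he]; exact hn

/-- In a finite `p`-group, every nontrivial normal subgroup meets the center nontrivially. -/
lemma aux_normal_meets_center {p : ℕ} [Fact p.Prime] {G : Type} [Group G] [Finite G]
    (hG : IsPGroup p G) (N : Subgroup G) [N.Normal] (hN : N ≠ ⊥) :
    ∃ x : G, x ∈ N ∧ x ∈ Subgroup.center G ∧ x ≠ 1 := by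
  have hN' : IsPGroup p N := hG.to_subgroup N
  have hnt : Nontrivial N := N.nontrivial_iff_ne_bot.mpr hN
  obtain ⟨k, hk0, hcard⟩ := hN'.nontrivial_iff_card.mp hnt
  have hdvd : p ∣ Nat.card N := hcard ▸ dvd_pow_self p hk0.ne'
  have hGC : IsPGroup p (ConjAct G) := hG.of_equiv ConjAct.toConjAct
  have h1 : (1 : N) ∈ MulAction.fixedPoints (ConjAct G) N := fun g => smul_one g
  obtain ⟨b, hb, hb1⟩ := hGC.exists_fixed_point_of_prime_dvd_card_of_fixed_point N hdvd h1
  refine ⟨(b : G), b.2, Subgroup.mem_center_iff.mpr fun g => ?_, ?_⟩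
  · have hcoe : ConjAct.toConjAct g • (b : G) = (b : G) :=
      congrArg Subtype.val (hb (ConjAct.toConjAct g))
    rw [ConjAct.toConjAct_smul] at hcoe
    calc g * b = g * b * g⁻¹ * g := by group
    _ = (b : G) * g := by rw [hcoe]
  · intro h
    exact hb1 (Subtype.ext (by simp [h]))

/-- From a nontrivial element of a finite `p`-group, extract a power of order exactly `p`. -/
lemma aux_pow_order_p {p : ℕ} (hp : p.Prime) {G : Type} [Group G] [Finite G]
    (hG : IsPGroup p G) {x : G} (hx : x ≠ 1) :
    ∃ n : ℕ, orderOf (x ^ n) = p := by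
  haveI : Fact p.Prime := ⟨hp⟩
  obtain ⟨k, hk⟩ := (IsPGroup.iff_orderOf.mp hG) x
  have hk0 : k ≠ 0 := by
    rintro rfl
    exact hx (orderOf_eq_one_iff.mp (by simpa using hk))
  refine ⟨p ^ (k - 1), ?_⟩
  have hne : x ^ p ^ (k - 1) ≠ 1 := by
    intro h
    have hd := orderOf_dvd_of_pow_eq_one h
    rw [hk] at hd
    have := (Nat.pow_dvd_pow_iff_le_right hp.one_lt).mp hd
    omega
  have hpe : (x ^ p ^ (k - 1)) ^ p = 1 := by
    rw [← pow_mul, ← pow_succ]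
    have hke : k - 1 + 1 = k := by omega
    rw [hke, ← hk, pow_orderOf_eq_one]
  exact orderOf_eq_prime hpe hne

/-- A finite `p`-group which is not elementary abelian contains a central subgroup of order `p`
which is not a direct factor. -/
theorem exists_central_subgroup_not_direct_factor
    (p : ℕ) (hp : p.Prime) (G : Type) [Group G] [Finite G] (hG : IsPGroup p G)
    (hne : ¬ IsElementaryAbelian p G) :
    ∃ C : Subgroup G, C ≤ Subgroup.center G ∧ Nat.card C = p ∧
      ¬ ∃ K : Subgroup G, K.Normal ∧ K ⊓ C = ⊥ ∧ K ⊔ C = ⊤ := by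
  haveI : Fact p.Prime := ⟨hp⟩
  by_cases hcomm : ∀ a b : G, a * b = b * a
  · -- abelian case: some element has order > p
    obtain ⟨g, hg⟩ : ∃ g : G, g ^ p ≠ 1 := by
      by_contra h
      push_neg at h
      exact hne ⟨hcomm, h⟩
    obtain ⟨k, hk⟩ := (IsPGroup.iff_orderOf.mp hG) g
    have hk2 : 2 ≤ k := by
      by_contra hlt
      push_neg at hlt
      have hdvd : p ^ k ∣ p ^ 1 := pow_dvd_pow p (by omega)
      rw [pow_one] at hdvd
      exact hg (orderOf_dvd_iff_pow_eq_one.mp (hk ▸ hdvd))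
    set h : G := g ^ p ^ (k - 2) with hhdef
    have hexp : p ^ (k - 2) * p = p ^ (k - 1) := by
      rw [← pow_succ]
      congr 1
      omega
    have hhp : h ^ p = g ^ p ^ (k - 1) := by
      rw [hhdef, ← pow_mul, hexp]
    have hhpne : h ^ p ≠ 1 := by
      rw [hhp]
      intro he
      have hd := orderOf_dvd_of_pow_eq_one he
      rw [hk] at hd
      have := (Nat.pow_dvd_pow_iff_le_right hp.one_lt).mp hd
      omega
    have hhpp : (h ^ p) ^ p = 1 := by
      rw [hhp, ← pow_mul, ← pow_succ]
      have hke : k - 1 + 1 = k := by omega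
      rw [hke, ← hk, pow_orderOf_eq_one]
    set x : G := h ^ p with hxdef
    have hxord : orderOf x = p := orderOf_eq_prime hhpp hhpne
    set C : Subgroup G := Subgroup.zpowers x with hCdef
    have hCle : C ≤ Subgroup.center G := fun y _ =>
      Subgroup.mem_center_iff.mpr fun z => hcomm z y
    refine ⟨C, hCle, by rw [hCdef, Nat.card_zpowers, hxord], ?_⟩
    rintro ⟨K, hKn, hint, hsup⟩
    haveI : C.Normal := aux_normal_of_le_center hCle
    have hmem : h ∈ ((K : Set G) * (C : Set G)) := by
      rw [← Subgroup.mul_normal K C, hsup]; trivial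
    obtain ⟨k₀, hk₀, c, hc, hkc⟩ := hmem
    obtain ⟨m, hm⟩ := Subgroup.mem_zpowers_iff.mp hc
    have hcp : c ^ p = 1 := by
      rw [← hm, ← zpow_natCast (x ^ m), ← zpow_mul, mul_comm, zpow_mul, zpow_natCast,
        hhpp, one_zpow]
    have hhpK : h ^ p ∈ K := by
      have hmp : (k₀ * c) ^ p = k₀ ^ p * c ^ p := Commute.mul_pow (hcomm k₀ c) p
      rw [← hkc, hmp, hcp, mul_one]
      exact K.pow_mem hk₀ p
    have hxKC : x ∈ K ⊓ C := ⟨hhpK, Subgroup.mem_zpowers x⟩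
    rw [hint, Subgroup.mem_bot] at hxKC
    exact hhpne hxKC
  · -- nonabelian case
    push_neg at hcomm
    obtain ⟨a, b, hab⟩ := hcomm
    have hcne : commutator G ≠ ⊥ := by
      intro hbot
      have hmem : ⁅a, b⁆ ∈ commutator G :=
        commutator_def G ▸
          Subgroup.commutator_mem_commutator (Subgroup.mem_top a) (Subgroup.mem_top b)
      rw [hbot, Subgroup.mem_bot] at hmem
      exact hab (commutatorElement_eq_one_iff_commute.mp hmem)
    obtain ⟨x, hxc, hxz, hx1⟩ := aux_normal_meets_center hG (commutator G) hcne
    obtain ⟨n, hn⟩ := aux_pow_order_p hp hG hx1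
    set y : G := x ^ n with hydef
    have hyc : y ∈ commutator G := Subgroup.pow_mem _ hxc n
    have hyz : y ∈ Subgroup.center G := Subgroup.pow_mem _ hxz n
    set C : Subgroup G := Subgroup.zpowers y with hCdef
    have hCle : C ≤ Subgroup.center G := Subgroup.zpowers_le.mpr hyz
    refine ⟨C, hCle, by rw [hCdef, Nat.card_zpowers, hn], ?_⟩
    rintro ⟨K, hKn, hint, hsup⟩
    haveI := hKn
    haveI : C.Normal := aux_normal_of_le_center hCle
    have hdecomp : ∀ z : G, ∃ kz ∈ K, ∃ cz ∈ C, kz * cz = z := by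
      intro z
      have hz : z ∈ ((K : Set G) * (C : Set G)) := by
        rw [← Subgroup.mul_normal K C, hsup]; trivial
      obtain ⟨kz, hkz, cz, hcz, he⟩ := hz
      exact ⟨kz, hkz, cz, hcz, he⟩
    have hcommK : commutator G ≤ K := by
      rw [commutator_def, Subgroup.commutator_le]
      intro a' _ b' _
      obtain ⟨k1, hk1, c1, hc1, he1⟩ := hdecomp a'
      obtain ⟨k2, hk2, c2, hc2, he2⟩ := hdecomp b'
      rw [← QuotientGroup.ker_mk' K, MonoidHom.mem_ker, map_commutatorElement,
        commutatorElement_eq_one_iff_commute]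
      have hpi : ∀ kk, kk ∈ K → QuotientGroup.mk' K kk = 1 := fun kk hkk =>
        (QuotientGroup.eq_one_iff kk).mpr hkk
      have ha' : QuotientGroup.mk' K a' = QuotientGroup.mk' K c1 := by
        rw [← he1, map_mul, hpi k1 hk1, one_mul]
      have hb' : QuotientGroup.mk' K b' = QuotientGroup.mk' K c2 := by
        rw [← he2, map_mul, hpi k2 hk2, one_mul]
      have hcc : Commute c1 c2 := Subgroup.mem_center_iff.mp (hCle hc2) c1
      rw [ha', hb']
      exact hcc.map (QuotientGroup.mk' K)
    have hyKC : y ∈ K ⊓ C := ⟨hcommK hyc, Subgroup.mem_zpowers y⟩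
    rw [hint, Subgroup.mem_bot] at hyKC
    rw [hyKC] at hn
    simp at hn
    exact hp.one_lt.ne' hn.symm
end

section
/- Let p be a prime and let α, β, γ, δ be positive integers with 0 ≤ γ − δ ≤ min{α, β}, let G = G(α,β,γ,δ), and let ε = max{α, β, 2γ − δ}. Then the three subgroups ⟨a, c⟩, ⟨b, c⟩ and ⟨a, b^{p^{γ−δ}}⟩ of G each have index dividing p^ε in G, and their intersection ⟨a,c⟩ ∩ ⟨b,c⟩ ∩ ⟨a, b^{p^{γ−δ}}⟩ is the trivial subgroup. -/
open scoped commutatorElement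

/-- The relators for the presentation
`⟨a, b, c ∣ [a,c] = [b,c] = 1 = a^{p^α} = b^{p^β} = c^{p^γ}, [a,b] = c^{p^δ}⟩`,
where `a`, `b`, `c` are the generators indexed by `0`, `1`, `2 : Fin 3`. -/
def pgRels (p α β γ δ : ℕ) : Set (FreeGroup (Fin 3)) :=
  {⁅FreeGroup.of (0 : Fin 3), FreeGroup.of (2 : Fin 3)⁆, ⁅FreeGroup.of (1 : Fin 3), FreeGroup.of (2 : Fin 3)⁆,
    FreeGroup.of (0 : Fin 3) ^ p ^ α, FreeGroup.of (1 : Fin 3) ^ p ^ β, FreeGroup.of (2 : Fin 3) ^ p ^ γ,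
    ⁅FreeGroup.of (0 : Fin 3), FreeGroup.of (1 : Fin 3)⁆ * (FreeGroup.of (2 : Fin 3) ^ p ^ δ)⁻¹}

/-- The group `G(α,β,γ,δ)` with presentation
`⟨a, b, c ∣ [a,c] = [b,c] = 1 = a^{p^α} = b^{p^β} = c^{p^γ}, [a,b] = c^{p^δ}⟩`. -/
abbrev GG (p α β γ δ : ℕ) : Type := PresentedGroup (pgRels p α β γ δ)

/-- The generator `a` of `G(α,β,γ,δ)`. -/
def ga (p α β γ δ : ℕ) : GG p α β γ δ := PresentedGroup.of (0 : Fin 3)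
/-- The generator `b` of `G(α,β,γ,δ)`. -/
def gb (p α β γ δ : ℕ) : GG p α β γ δ := PresentedGroup.of (1 : Fin 3)
/-- The generator `c` of `G(α,β,γ,δ)`. -/
def gc (p α β γ δ : ℕ) : GG p α β γ δ := PresentedGroup.of (2 : Fin 3)

set_option linter.unusedSectionVars false

namespace GGaux


/-- key cast helper -/
lemma cast_mul_mod {n : ℕ} (a b m : ℕ) (h : n ∣ a * b) :
    ((a * (m % b) : ℕ) : ZMod n) = ((a * m : ℕ) : ZMod n) := by
  conv_rhs => rw [← Nat.mod_add_div m b]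
  have h0 : ((a * b : ℕ) : ZMod n) = 0 := (ZMod.natCast_eq_zero_iff _ _).2 h
  push_cast
  push_cast at h0
  ring_nf
  rw [show (a : ZMod n) * (b : ZMod n) * ((m / b : ℕ) : ZMod n)
        = ((a:ZMod n) * b) * (m / b : ℕ) from by ring, h0, zero_mul, add_zero]

/-- The model group underlying type. -/
structure Mdl (p α β γ δ : ℕ) where
  x : ZMod (p ^ α)
  y : ZMod (p ^ β)
  z : ZMod (p ^ γ)

section

variable (p α β γ δ : ℕ)

/-- the cocycle -/
def Bc (j : ZMod (p ^ β)) (i : ZMod (p ^ α)) : ZMod (p ^ γ) :=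
  ((p ^ δ * (j.val * i.val) : ℕ) : ZMod (p ^ γ))

variable [Fact (γ ≤ δ + α)] [Fact (γ ≤ δ + β)] [NeZero p]

lemma dvdA : p ^ γ ∣ p ^ δ * p ^ α := by
  rw [← pow_add]; exact pow_dvd_pow p (Fact.out : γ ≤ δ + α)

lemma dvdB : p ^ γ ∣ p ^ δ * p ^ β := by
  rw [← pow_add]; exact pow_dvd_pow p (Fact.out : γ ≤ δ + β)

lemma Bc_add_right (j : ZMod (p ^ β)) (i i' : ZMod (p ^ α)) :
    Bc p α β γ δ j (i + i') = Bc p α β γ δ j i + Bc p α β γ δ j i' := by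
  unfold Bc
  rw [ZMod.val_add]
  rw [show p ^ δ * (j.val * ((i.val + i'.val) % p ^ α)) =
      (p ^ δ * j.val) * ((i.val + i'.val) % p ^ α) from by ring]
  rw [cast_mul_mod _ _ _ (by
    calc p ^ γ ∣ p ^ δ * p ^ α := dvdA p α γ δ
    _ ∣ p ^ δ * j.val * p ^ α := ⟨j.val, by ring⟩ )]
  push_cast
  ring

lemma Bc_add_left (j j' : ZMod (p ^ β)) (i : ZMod (p ^ α)) :
    Bc p α β γ δ (j + j') i = Bc p α β γ δ j i + Bc p α β γ δ j' i := by
  unfold Bc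
  rw [ZMod.val_add]
  rw [show p ^ δ * ((j.val + j'.val) % p ^ β * i.val) =
      (p ^ δ * i.val) * ((j.val + j'.val) % p ^ β) from by ring]
  rw [cast_mul_mod _ _ _ (by
    calc p ^ γ ∣ p ^ δ * p ^ β := dvdB p β γ δ
    _ ∣ p ^ δ * i.val * p ^ β := ⟨i.val, by ring⟩ )]
  push_cast
  ring

lemma Bc_zero_left (i : ZMod (p ^ α)) : Bc p α β γ δ 0 i = 0 := by
  unfold Bc
  rw [ZMod.val_zero]
  norm_num

lemma Bc_zero_right (j : ZMod (p ^ β)) : Bc p α β γ δ j 0 = 0 := by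
  unfold Bc
  rw [ZMod.val_zero]
  norm_num

lemma Bc_neg_left (j : ZMod (p ^ β)) (i : ZMod (p ^ α)) :
    Bc p α β γ δ (-j) i = - Bc p α β γ δ j i := by
  have := Bc_add_left p α β γ δ j (-j) i
  rw [add_neg_cancel, Bc_zero_left] at this
  linear_combination -this

lemma Bc_neg_right (j : ZMod (p ^ β)) (i : ZMod (p ^ α)) :
    Bc p α β γ δ j (-i) = - Bc p α β γ δ j i := by
  have := Bc_add_right p α β γ δ j i (-i)
  rw [add_neg_cancel, Bc_zero_right] at this
  linear_combination -this

instance : Group (Mdl p α β γ δ) where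
  mul u v := ⟨u.x + v.x, u.y + v.y, u.z + v.z - Bc p α β γ δ u.y v.x⟩
  one := ⟨0, 0, 0⟩
  inv u := ⟨-u.x, -u.y, -u.z - Bc p α β γ δ u.y u.x⟩
  mul_assoc u v w := by
    show Mdl.mk ((u.x + v.x) + w.x) ((u.y + v.y) + w.y)
        ((u.z + v.z - Bc p α β γ δ u.y v.x) + w.z - Bc p α β γ δ (u.y + v.y) w.x)
      = Mdl.mk (u.x + (v.x + w.x)) (u.y + (v.y + w.y))
        (u.z + (v.z + w.z - Bc p α β γ δ v.y w.x) - Bc p α β γ δ u.y (v.x + w.x))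
    rw [Bc_add_left, Bc_add_right]
    congr 1 <;> ring
  one_mul u := by
    show Mdl.mk (0 + u.x) (0 + u.y) (0 + u.z - Bc p α β γ δ 0 u.x) = u
    rw [Bc_zero_left]
    cases u; congr 1 <;> ring
  mul_one u := by
    show Mdl.mk (u.x + 0) (u.y + 0) (u.z + 0 - Bc p α β γ δ u.y 0) = u
    rw [Bc_zero_right]
    cases u; congr 1 <;> ring
  inv_mul_cancel u := by
    show Mdl.mk (-u.x + u.x) (-u.y + u.y)
        ((-u.z - Bc p α β γ δ u.y u.x) + u.z - Bc p α β γ δ (-u.y) u.x) = Mdl.mk 0 0 0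
    rw [Bc_neg_left]
    congr 1 <;> ring

lemma mdl_mul (u v : Mdl p α β γ δ) :
    u * v = ⟨u.x + v.x, u.y + v.y, u.z + v.z - Bc p α β γ δ u.y v.x⟩ := rfl

lemma mdl_one : (1 : Mdl p α β γ δ) = ⟨0, 0, 0⟩ := rfl

lemma mdl_inv (u : Mdl p α β γ δ) :
    u⁻¹ = ⟨-u.x, -u.y, -u.z - Bc p α β γ δ u.y u.x⟩ := rfl

end



section

variable (p α β γ δ : ℕ)

lemma rel_one {r : FreeGroup (Fin 3)} (hr : r ∈ pgRels p α β γ δ) :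
    (QuotientGroup.mk r : GG p α β γ δ) = 1 :=
  (QuotientGroup.eq_one_iff r).2 (Subgroup.subset_normalClosure hr)

lemma ga_eq : ga p α β γ δ = QuotientGroup.mk (FreeGroup.of (0 : Fin 3)) := rfl
lemma gb_eq : gb p α β γ δ = QuotientGroup.mk (FreeGroup.of (1 : Fin 3)) := rfl
lemma gc_eq : gc p α β γ δ = QuotientGroup.mk (FreeGroup.of (2 : Fin 3)) := rfl

lemma mk_eq (x : FreeGroup (Fin 3)) :
    (QuotientGroup.mk x : GG p α β γ δ)
      = QuotientGroup.mk' (Subgroup.normalClosure (pgRels p α β γ δ)) x := rfl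

lemma ga_eq' : ga p α β γ δ
    = QuotientGroup.mk' (Subgroup.normalClosure (pgRels p α β γ δ)) (FreeGroup.of (0 : Fin 3)) := rfl
lemma gb_eq' : gb p α β γ δ
    = QuotientGroup.mk' (Subgroup.normalClosure (pgRels p α β γ δ)) (FreeGroup.of (1 : Fin 3)) := rfl
lemma gc_eq' : gc p α β γ δ
    = QuotientGroup.mk' (Subgroup.normalClosure (pgRels p α β γ δ)) (FreeGroup.of (2 : Fin 3)) := rfl

lemma ga_pow : ga p α β γ δ ^ p ^ α = 1 := by
  have h := rel_one p α β γ δ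
    (show FreeGroup.of (0 : Fin 3) ^ p ^ α ∈ pgRels p α β γ δ by simp [pgRels])
  rw [mk_eq, map_pow] at h
  rw [ga_eq']; exact h

lemma gb_pow : gb p α β γ δ ^ p ^ β = 1 := by
  have h := rel_one p α β γ δ
    (show FreeGroup.of (1 : Fin 3) ^ p ^ β ∈ pgRels p α β γ δ by simp [pgRels])
  rw [mk_eq, map_pow] at h
  rw [gb_eq']; exact h

lemma gc_pow : gc p α β γ δ ^ p ^ γ = 1 := by
  have h := rel_one p α β γ δ
    (show FreeGroup.of (2 : Fin 3) ^ p ^ γ ∈ pgRels p α β γ δ by simp [pgRels])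
  rw [mk_eq, map_pow] at h
  rw [gc_eq']; exact h

lemma comm_ac : Commute (ga p α β γ δ) (gc p α β γ δ) := by
  have h := rel_one p α β γ δ
    (show ⁅FreeGroup.of (0 : Fin 3), FreeGroup.of (2 : Fin 3)⁆ ∈ pgRels p α β γ δ by simp [pgRels])
  rw [mk_eq, map_commutatorElement] at h
  rw [← commutatorElement_eq_one_iff_commute, ga_eq', gc_eq']; exact h

lemma comm_bc : Commute (gb p α β γ δ) (gc p α β γ δ) := by
  have h := rel_one p α β γ δ
    (show ⁅FreeGroup.of (1 : Fin 3), FreeGroup.of (2 : Fin 3)⁆ ∈ pgRels p α β γ δ by simp [pgRels])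
  rw [mk_eq, map_commutatorElement] at h
  rw [← commutatorElement_eq_one_iff_commute, gb_eq', gc_eq']; exact h

lemma comm_ab : ⁅ga p α β γ δ, gb p α β γ δ⁆ = gc p α β γ δ ^ p ^ δ := by
  have h := rel_one p α β γ δ
    (show ⁅FreeGroup.of (0 : Fin 3), FreeGroup.of (1 : Fin 3)⁆
        * (FreeGroup.of (2 : Fin 3) ^ p ^ δ)⁻¹ ∈ pgRels p α β γ δ by simp [pgRels])
  rw [mk_eq, map_mul, map_inv, map_pow, map_commutatorElement, mul_inv_eq_one] at h
  rw [ga_eq', gb_eq', gc_eq']; exact h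

end


section

variable (p α β γ δ : ℕ) [Fact (γ ≤ δ + α)] [Fact (γ ≤ δ + β)] [NeZero p]
  [Fact (1 < p ^ α)] [Fact (1 < p ^ β)] [Fact (1 < p ^ γ)]

def mdlA : Mdl p α β γ δ := ⟨1, 0, 0⟩
def mdlB : Mdl p α β γ δ := ⟨0, 1, 0⟩
def mdlC : Mdl p α β γ δ := ⟨0, 0, 1⟩

lemma mdlA_pow (n : ℕ) : mdlA p α β γ δ ^ n = ⟨(n : ZMod (p ^ α)), 0, 0⟩ := by
  induction n with
  | zero => rw [pow_zero, mdl_one]; congr 1 <;> push_cast <;> ring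
  | succ n ih =>
      rw [pow_succ, ih, mdl_mul]
      unfold mdlA
      rw [Bc_zero_left]
      congr 1 <;> push_cast <;> ring

lemma mdlB_pow (n : ℕ) : mdlB p α β γ δ ^ n = ⟨0, (n : ZMod (p ^ β)), 0⟩ := by
  induction n with
  | zero => rw [pow_zero, mdl_one]; congr 1 <;> push_cast <;> ring
  | succ n ih =>
      rw [pow_succ, ih, mdl_mul]
      unfold mdlB
      rw [Bc_zero_right]
      congr 1 <;> push_cast <;> ring

lemma mdlC_pow (n : ℕ) : mdlC p α β γ δ ^ n = ⟨0, 0, (n : ZMod (p ^ γ))⟩ := by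
  induction n with
  | zero => rw [pow_zero, mdl_one]; congr 1 <;> push_cast <;> ring
  | succ n ih =>
      rw [pow_succ, ih, mdl_mul]
      unfold mdlC
      rw [Bc_zero_left]
      congr 1 <;> push_cast <;> ring

lemma Bc_one_one : Bc p α β γ δ 1 1 = ((p ^ δ : ℕ) : ZMod (p ^ γ)) := by
  unfold Bc
  rw [ZMod.val_one, ZMod.val_one]
  norm_num

lemma comm_AC : mdlA p α β γ δ * mdlC p α β γ δ = mdlC p α β γ δ * mdlA p α β γ δ := by
  unfold mdlA mdlC
  rw [mdl_mul, mdl_mul]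
  simp [Bc_zero_left, Bc_zero_right]

lemma comm_BC : mdlB p α β γ δ * mdlC p α β γ δ = mdlC p α β γ δ * mdlB p α β γ δ := by
  unfold mdlB mdlC
  rw [mdl_mul, mdl_mul]
  simp [Bc_zero_left, Bc_zero_right]

lemma comm_AB : ⁅mdlA p α β γ δ, mdlB p α β γ δ⁆ = mdlC p α β γ δ ^ p ^ δ := by
  have h : ⁅mdlA p α β γ δ, mdlB p α β γ δ⁆
      = (mdlA p α β γ δ * mdlB p α β γ δ) * (mdlB p α β γ δ * mdlA p α β γ δ)⁻¹ := by
    rw [commutatorElement_def]; group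
  rw [h, mdlC_pow]
  unfold mdlA mdlB
  rw [mdl_mul, mdl_mul, mdl_inv, mdl_mul]
  simp only [zero_add, add_zero, neg_zero, zero_sub, neg_neg]
  rw [Bc_neg_right, Bc_one_one]
  congr 1 <;> simp [Bc_zero_left]

def fgen : Fin 3 → Mdl p α β γ δ := fun i =>
  if i = 0 then mdlA p α β γ δ else if i = 1 then mdlB p α β γ δ else mdlC p α β γ δ

lemma fgen0 : fgen p α β γ δ 0 = mdlA p α β γ δ := rfl
lemma fgen1 : fgen p α β γ δ 1 = mdlB p α β γ δ := rfl
lemma fgen2 : fgen p α β γ δ 2 = mdlC p α β γ δ := rfl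

lemma hrels : ∀ r ∈ pgRels p α β γ δ, FreeGroup.lift (fgen p α β γ δ) r = 1 := by
  intro r hr
  simp only [pgRels, Set.mem_insert_iff, Set.mem_singleton_iff] at hr
  rcases hr with rfl | rfl | rfl | rfl | rfl | rfl
  · rw [map_commutatorElement, FreeGroup.lift_apply_of, FreeGroup.lift_apply_of, fgen0, fgen2,
      commutatorElement_eq_one_iff_mul_comm]
    exact comm_AC p α β γ δ
  · rw [map_commutatorElement, FreeGroup.lift_apply_of, FreeGroup.lift_apply_of, fgen1, fgen2,
      commutatorElement_eq_one_iff_mul_comm]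
    exact comm_BC p α β γ δ
  · rw [map_pow, FreeGroup.lift_apply_of, fgen0, mdlA_pow, ZMod.natCast_self, mdl_one]
  · rw [map_pow, FreeGroup.lift_apply_of, fgen1, mdlB_pow, ZMod.natCast_self, mdl_one]
  · rw [map_pow, FreeGroup.lift_apply_of, fgen2, mdlC_pow, ZMod.natCast_self, mdl_one]
  · rw [map_mul, map_inv, map_pow, map_commutatorElement, FreeGroup.lift_apply_of, FreeGroup.lift_apply_of,
      FreeGroup.lift_apply_of, fgen0, fgen1, fgen2, mul_inv_eq_one, comm_AB]

def φGG : GG p α β γ δ →* Mdl p α β γ δ := PresentedGroup.toGroup (hrels p α β γ δ)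

lemma φGG_a : φGG p α β γ δ (ga p α β γ δ) = mdlA p α β γ δ := PresentedGroup.toGroup.of _
lemma φGG_b : φGG p α β γ δ (gb p α β γ δ) = mdlB p α β γ δ := PresentedGroup.toGroup.of _
lemma φGG_c : φGG p α β γ δ (gc p α β γ δ) = mdlC p α β γ δ := PresentedGroup.toGroup.of _

end

section

variable {G : Type*} [Group G]

lemma pow_mod_eq (g : G) {n : ℕ} (hg : g ^ n = 1) (m : ℕ) : g ^ (m % n) = g ^ m := by
  conv_rhs => rw [← Nat.mod_add_div m n, pow_add, pow_mul, hg, one_pow, mul_one]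

lemma pow_val_add (g : G) {n : ℕ} [NeZero n] (hg : g ^ n = 1) (s t : ZMod n) :
    g ^ (s + t).val = g ^ s.val * g ^ t.val := by
  rw [ZMod.val_add, pow_mod_eq g hg, pow_add]

lemma pow_val_neg (g : G) {n : ℕ} [NeZero n] (hg : g ^ n = 1) (s : ZMod n) :
    g ^ (-s).val = (g ^ s.val)⁻¹ := by
  have h := pow_val_add g hg (-s) s
  rw [neg_add_cancel, ZMod.val_zero, pow_zero] at h
  rw [eq_inv_iff_mul_eq_one]
  exact h.symm

lemma pow_val_natCast (g : G) {n : ℕ} [NeZero n] (hg : g ^ n = 1) (m : ℕ) :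
    g ^ ((m : ZMod n)).val = g ^ m := by
  rw [ZMod.val_natCast, pow_mod_eq g hg]

end

section

variable (p α β γ δ : ℕ)

lemma gc_central (x : GG p α β γ δ) : Commute x (gc p α β γ δ) := by
  have hx : x ∈ Subgroup.centralizer {gc p α β γ δ} := by
    have htop : x ∈ Subgroup.closure (Set.range (PresentedGroup.of :
        Fin 3 → GG p α β γ δ)) := by
      rw [PresentedGroup.closure_range_of]; trivial
    refine Subgroup.closure_le _ |>.2 ?_ htop
    rintro y ⟨i, rfl⟩
    rw [SetLike.mem_coe, Subgroup.mem_centralizer_iff]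
    rintro h rfl
    fin_cases i
    · exact ((comm_ac p α β γ δ).symm).eq
    · exact ((comm_bc p α β γ δ).symm).eq
    · rfl
  rw [Subgroup.mem_centralizer_iff] at hx
  exact Commute.symm (hx _ rfl)

lemma gc_pow_central (k : ℕ) (x : GG p α β γ δ) : Commute x (gc p α β γ δ ^ k) :=
  (gc_central p α β γ δ x).pow_right k

lemma hba : gb p α β γ δ * ga p α β γ δ
    = ga p α β γ δ * gb p α β γ δ * (gc p α β γ δ ^ p ^ δ)⁻¹ := by
  have h := comm_ab p α β γ δ
  have h2 : gb p α β γ δ * ga p α β γ δ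
      = (gc p α β γ δ ^ p ^ δ)⁻¹ * (ga p α β γ δ * gb p α β γ δ) := by
    rw [← h, commutatorElement_def]
    group
  rw [h2,
    ← ((gc_pow_central p α β γ δ (p ^ δ) (ga p α β γ δ * gb p α β γ δ)).inv_right).eq]

lemma b_a_pow (n : ℕ) : gb p α β γ δ * ga p α β γ δ ^ n
    = ga p α β γ δ ^ n * gb p α β γ δ * (gc p α β γ δ ^ (p ^ δ * n))⁻¹ := by
  set a := ga p α β γ δ
  set b := gb p α β γ δ
  set c := gc p α β γ δ
  induction n with
  | zero => simp
  | succ n ih =>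
      have h1 : (c ^ (p ^ δ * n))⁻¹ * a = a * (c ^ (p ^ δ * n))⁻¹ :=
        ((gc_pow_central p α β γ δ (p ^ δ * n) a).inv_right).symm.eq
      calc b * a ^ (n + 1) = (b * a ^ n) * a := by rw [pow_succ, mul_assoc]
        _ = a ^ n * b * ((c ^ (p ^ δ * n))⁻¹ * a) := by rw [ih]; group
        _ = a ^ n * b * (a * (c ^ (p ^ δ * n))⁻¹) := by rw [h1]
        _ = a ^ n * (b * a) * (c ^ (p ^ δ * n))⁻¹ := by group
        _ = a ^ n * (a * b * (c ^ p ^ δ)⁻¹) * (c ^ (p ^ δ * n))⁻¹ := by rw [hba]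
        _ = a ^ (n + 1) * b * ((c ^ p ^ δ)⁻¹ * (c ^ (p ^ δ * n))⁻¹) := by
            rw [pow_succ]; group
        _ = a ^ (n + 1) * b * (c ^ (p ^ δ * (n + 1)))⁻¹ := by
            rw [← mul_inv_rev, ← pow_add,
              show p ^ δ * n + p ^ δ = p ^ δ * (n + 1) from by ring]

lemma b_pow_a_pow (m n : ℕ) : gb p α β γ δ ^ m * ga p α β γ δ ^ n
    = ga p α β γ δ ^ n * gb p α β γ δ ^ m * (gc p α β γ δ ^ (p ^ δ * (m * n)))⁻¹ := by
  set a := ga p α β γ δ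
  set b := gb p α β γ δ
  set c := gc p α β γ δ
  induction m with
  | zero => simp
  | succ m ih =>
      have h1 : (c ^ (p ^ δ * (m * n)))⁻¹ * b = b * (c ^ (p ^ δ * (m * n)))⁻¹ :=
        ((gc_pow_central p α β γ δ _ b).inv_right).symm.eq
      calc b ^ (m + 1) * a ^ n = b ^ m * (b * a ^ n) := by rw [pow_succ, mul_assoc]
        _ = b ^ m * (a ^ n * b * (c ^ (p ^ δ * n))⁻¹) := by rw [b_a_pow]
        _ = (b ^ m * a ^ n) * b * (c ^ (p ^ δ * n))⁻¹ := by group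
        _ = a ^ n * b ^ m * (c ^ (p ^ δ * (m * n)))⁻¹ * b * (c ^ (p ^ δ * n))⁻¹ := by
            rw [ih]
        _ = a ^ n * b ^ m * (b * (c ^ (p ^ δ * (m * n)))⁻¹) * (c ^ (p ^ δ * n))⁻¹ := by
            rw [← h1]; group
        _ = a ^ n * b ^ (m + 1) * ((c ^ (p ^ δ * (m * n)))⁻¹ * (c ^ (p ^ δ * n))⁻¹) := by
            rw [pow_succ]; group
        _ = a ^ n * b ^ (m + 1) * (c ^ (p ^ δ * ((m + 1) * n)))⁻¹ := by
            rw [← mul_inv_rev, ← pow_add,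
              show p ^ δ * n + p ^ δ * (m * n) = p ^ δ * ((m + 1) * n) from by ring]

end


section

variable (p α β γ δ : ℕ) [Fact (γ ≤ δ + α)] [Fact (γ ≤ δ + β)] [NeZero p]
  [Fact (1 < p ^ α)] [Fact (1 < p ^ β)] [Fact (1 < p ^ γ)]

lemma nf_mul (m n k m' n' k' : ℕ) :
    (ga p α β γ δ ^ m * gb p α β γ δ ^ n * gc p α β γ δ ^ k)
      * (ga p α β γ δ ^ m' * gb p α β γ δ ^ n' * gc p α β γ δ ^ k')
    = (ga p α β γ δ ^ m * ga p α β γ δ ^ m') * (gb p α β γ δ ^ n * gb p α β γ δ ^ n')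
      * ((gc p α β γ δ ^ k * gc p α β γ δ ^ k')
          * (gc p α β γ δ ^ (p ^ δ * (n * m')))⁻¹) := by
  set a := ga p α β γ δ
  set b := gb p α β γ δ
  set c := gc p α β γ δ
  calc (a ^ m * b ^ n * c ^ k) * (a ^ m' * b ^ n' * c ^ k')
      = a ^ m * b ^ n * (c ^ k * a ^ m') * b ^ n' * c ^ k' := by group
    _ = a ^ m * b ^ n * (a ^ m' * c ^ k) * b ^ n' * c ^ k' := by
        rw [← (gc_pow_central p α β γ δ k (a ^ m')).eq]
    _ = a ^ m * (b ^ n * a ^ m') * (c ^ k * b ^ n') * c ^ k' := by group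
    _ = a ^ m * (b ^ n * a ^ m') * (b ^ n' * c ^ k) * c ^ k' := by
        rw [← (gc_pow_central p α β γ δ k (b ^ n')).eq]
    _ = a ^ m * (a ^ m' * b ^ n * (c ^ (p ^ δ * (n * m')))⁻¹) * (b ^ n' * c ^ k) * c ^ k' := by
        rw [b_pow_a_pow]
    _ = a ^ m * (a ^ m' * b ^ n) * ((c ^ (p ^ δ * (n * m')))⁻¹ * b ^ n') * (c ^ k * c ^ k') := by
        group
    _ = a ^ m * (a ^ m' * b ^ n) * (b ^ n' * (c ^ (p ^ δ * (n * m')))⁻¹) * (c ^ k * c ^ k') := by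
        rw [← ((gc_pow_central p α β γ δ (p ^ δ * (n * m')) (b ^ n')).inv_right).eq]
    _ = (a ^ m * a ^ m') * (b ^ n * b ^ n')
          * ((c ^ (p ^ δ * (n * m')))⁻¹ * (c ^ k * c ^ k')) := by group
    _ = (a ^ m * a ^ m') * (b ^ n * b ^ n')
          * ((c ^ k * c ^ k') * (c ^ (p ^ δ * (n * m')))⁻¹) := by
        rw [((gc_pow_central p α β γ δ (p ^ δ * (n * m'))
          (c ^ k * c ^ k')).inv_right).eq]

def ψf (u : Mdl p α β γ δ) : GG p α β γ δ :=
  ga p α β γ δ ^ u.x.val * gb p α β γ δ ^ u.y.val * gc p α β γ δ ^ u.z.val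

lemma ψf_mul (u v : Mdl p α β γ δ) :
    ψf p α β γ δ (u * v) = ψf p α β γ δ u * ψf p α β γ δ v := by
  have hA := ga_pow p α β γ δ
  have hB := gb_pow p α β γ δ
  have hC := gc_pow p α β γ δ
  show ga p α β γ δ ^ (u.x + v.x).val * gb p α β γ δ ^ (u.y + v.y).val
      * gc p α β γ δ ^ (u.z + v.z - Bc p α β γ δ u.y v.x).val = _
  rw [pow_val_add _ hA, pow_val_add _ hB, sub_eq_add_neg, pow_val_add _ hC,
    pow_val_add _ hC, pow_val_neg _ hC,
    show Bc p α β γ δ u.y v.x = ((p ^ δ * (u.y.val * v.x.val) : ℕ) : ZMod (p ^ γ)) from rfl,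
    pow_val_natCast _ hC,
    show p ^ δ * (u.y.val * v.x.val) = p ^ δ * (u.y.val * v.x.val) from rfl]
  rw [ψf, ψf, nf_mul]

def ψh : Mdl p α β γ δ →* GG p α β γ δ := MonoidHom.mk' (ψf p α β γ δ) (ψf_mul p α β γ δ)

lemma ψφ_id (g : GG p α β γ δ) : ψh p α β γ δ (φGG p α β γ δ g) = g := by
  have h : (ψh p α β γ δ).comp (φGG p α β γ δ) = MonoidHom.id (GG p α β γ δ) := by
    apply PresentedGroup.ext
    intro i
    fin_cases i
    · show ψh p α β γ δ (φGG p α β γ δ (ga p α β γ δ)) = ga p α β γ δ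
      rw [φGG_a]
      show ga p α β γ δ ^ (1 : ZMod (p ^ α)).val * gb p α β γ δ ^ (0 : ZMod (p ^ β)).val
        * gc p α β γ δ ^ (0 : ZMod (p ^ γ)).val = ga p α β γ δ
      rw [ZMod.val_one, ZMod.val_zero, ZMod.val_zero, pow_one, pow_zero, pow_zero,
        mul_one, mul_one]
    · show ψh p α β γ δ (φGG p α β γ δ (gb p α β γ δ)) = gb p α β γ δ
      rw [φGG_b]
      show ga p α β γ δ ^ (0 : ZMod (p ^ α)).val * gb p α β γ δ ^ (1 : ZMod (p ^ β)).val
        * gc p α β γ δ ^ (0 : ZMod (p ^ γ)).val = gb p α β γ δ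
      rw [ZMod.val_one, ZMod.val_zero, ZMod.val_zero, pow_one, pow_zero, pow_zero,
        mul_one, one_mul]
    · show ψh p α β γ δ (φGG p α β γ δ (gc p α β γ δ)) = gc p α β γ δ
      rw [φGG_c]
      show ga p α β γ δ ^ (0 : ZMod (p ^ α)).val * gb p α β γ δ ^ (0 : ZMod (p ^ β)).val
        * gc p α β γ δ ^ (1 : ZMod (p ^ γ)).val = gc p α β γ δ
      rw [ZMod.val_one, ZMod.val_zero, ZMod.val_zero, pow_one, pow_zero, pow_zero,
        one_mul, one_mul]
  calc ψh p α β γ δ (φGG p α β γ δ g) = ((ψh p α β γ δ).comp (φGG p α β γ δ)) g := rfl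
    _ = g := by rw [h]; rfl

lemma φψ_id (u : Mdl p α β γ δ) : φGG p α β γ δ (ψh p α β γ δ u) = u := by
  show φGG p α β γ δ (ga p α β γ δ ^ u.x.val * gb p α β γ δ ^ u.y.val
    * gc p α β γ δ ^ u.z.val) = u
  rw [map_mul, map_mul, map_pow, map_pow, map_pow, φGG_a, φGG_b, φGG_c,
    mdlA_pow, mdlB_pow, mdlC_pow, mdl_mul, mdl_mul]
  simp only [Bc_zero_left, Bc_zero_right]
  cases u with
  | mk ux uy uz =>
      congr 1 <;> simp [ZMod.natCast_rightInverse ux, ZMod.natCast_rightInverse uy,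
        ZMod.natCast_rightInverse uz]

def eqv : GG p α β γ δ ≃* Mdl p α β γ δ :=
  { toFun := φGG p α β γ δ
    invFun := ψh p α β γ δ
    left_inv := ψφ_id p α β γ δ
    right_inv := φψ_id p α β γ δ
    map_mul' := map_mul (φGG p α β γ δ) }

end


section

variable (p α β γ δ : ℕ) [Fact (γ ≤ δ + α)] [Fact (γ ≤ δ + β)] [NeZero p]
  [Fact (1 < p ^ α)] [Fact (1 < p ^ β)] [Fact (1 < p ^ γ)]

lemma Bc_pmul (hδγ : δ ≤ γ) (t : ZMod (p ^ β)) (i : ZMod (p ^ α)) :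
    Bc p α β γ δ (((p ^ (γ - δ) : ℕ) : ZMod (p ^ β)) * t) i = 0 := by
  unfold Bc
  have hy : (((p ^ (γ - δ) : ℕ) : ZMod (p ^ β)) * t).val
      = (p ^ (γ - δ) * t.val) % p ^ β := by
    conv_lhs => rw [show t = ((t.val : ℕ) : ZMod (p ^ β)) from (ZMod.natCast_rightInverse t).symm]
    rw [← Nat.cast_mul, ZMod.val_natCast]
  rw [hy,
    show p ^ δ * ((p ^ (γ - δ) * t.val % p ^ β) * i.val)
      = (p ^ δ * i.val) * (p ^ (γ - δ) * t.val % p ^ β) from by ring,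
    cast_mul_mod _ _ _ (by
      calc p ^ γ ∣ p ^ δ * p ^ β := dvdB p β γ δ
        _ ∣ p ^ δ * i.val * p ^ β := ⟨i.val, by ring⟩),
    show (p ^ δ * i.val) * (p ^ (γ - δ) * t.val) = (p ^ δ * p ^ (γ - δ)) * (i.val * t.val)
      from by ring, ← pow_add, show δ + (γ - δ) = γ from by omega,
    Nat.cast_mul, ZMod.natCast_self, zero_mul]

def K1 : Subgroup (Mdl p α β γ δ) where
  carrier := {u | u.y = 0}
  mul_mem' := by
    intro u v hu hv
    show u.y + v.y = 0
    rw [show u.y = 0 from hu, show v.y = 0 from hv, add_zero]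
  one_mem' := rfl
  inv_mem' := by
    intro u hu
    show -u.y = 0
    rw [show u.y = 0 from hu, neg_zero]

def K2 : Subgroup (Mdl p α β γ δ) where
  carrier := {u | u.x = 0}
  mul_mem' := by
    intro u v hu hv
    show u.x + v.x = 0
    rw [show u.x = 0 from hu, show v.x = 0 from hv, add_zero]
  one_mem' := rfl
  inv_mem' := by
    intro u hu
    show -u.x = 0
    rw [show u.x = 0 from hu, neg_zero]

def K3 (hδγ : δ ≤ γ) : Subgroup (Mdl p α β γ δ) where
  carrier := {u | (∃ t : ZMod (p ^ β), u.y = ((p ^ (γ - δ) : ℕ) : ZMod (p ^ β)) * t)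
    ∧ u.z = 0}
  mul_mem' := by
    rintro u v ⟨⟨t, ht⟩, hz⟩ ⟨⟨t', ht'⟩, hz'⟩
    constructor
    · exact ⟨t + t', by show u.y + v.y = _; rw [ht, ht', mul_add]⟩
    · show u.z + v.z - Bc p α β γ δ u.y v.x = 0
      rw [hz, hz', ht, Bc_pmul p α β γ δ hδγ, add_zero, sub_zero]
  one_mem' := ⟨⟨0, by show (0 : ZMod (p ^ β)) = _; rw [mul_zero]⟩, rfl⟩
  inv_mem' := by
    rintro u ⟨⟨t, ht⟩, hz⟩
    constructor
    · exact ⟨-t, by show -u.y = _; rw [ht, mul_neg]⟩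
    · show -u.z - Bc p α β γ δ u.y u.x = 0
      rw [hz, ht, Bc_pmul p α β γ δ hδγ, neg_zero, sub_zero]

lemma closure_AC : Subgroup.closure {mdlA p α β γ δ, mdlC p α β γ δ} = K1 p α β γ δ := by
  apply le_antisymm
  · rw [Subgroup.closure_le]
    rintro u (rfl | rfl)
    · exact rfl
    · exact rfl
  · intro u hu
    have hy : u.y = 0 := hu
    have hrep : u = mdlA p α β γ δ ^ u.x.val * mdlC p α β γ δ ^ u.z.val := by
      rw [mdlA_pow, mdlC_pow, mdl_mul, Bc_zero_left]
      cases u with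
      | mk ux uy uz =>
          congr 1
          · simp [ZMod.natCast_rightInverse ux]
          · simpa using hy
          · simp [ZMod.natCast_rightInverse uz]
    rw [hrep]
    exact mul_mem (pow_mem (Subgroup.subset_closure (by simp)) _)
      (pow_mem (Subgroup.subset_closure (by simp)) _)

lemma closure_BC : Subgroup.closure {mdlB p α β γ δ, mdlC p α β γ δ} = K2 p α β γ δ := by
  apply le_antisymm
  · rw [Subgroup.closure_le]
    rintro u (rfl | rfl)
    · exact rfl
    · exact rfl
  · intro u hu
    have hx : u.x = 0 := hu
    have hrep : u = mdlB p α β γ δ ^ u.y.val * mdlC p α β γ δ ^ u.z.val := by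
      rw [mdlB_pow, mdlC_pow, mdl_mul, Bc_zero_right]
      cases u with
      | mk ux uy uz =>
          congr 1
          · simpa using hx
          · simp [ZMod.natCast_rightInverse uy]
          · simp [ZMod.natCast_rightInverse uz]
    rw [hrep]
    exact mul_mem (pow_mem (Subgroup.subset_closure (by simp)) _)
      (pow_mem (Subgroup.subset_closure (by simp)) _)

lemma closure_AD (hδγ : δ ≤ γ) :
    Subgroup.closure {mdlA p α β γ δ, mdlB p α β γ δ ^ p ^ (γ - δ)}
      = K3 p α β γ δ hδγ := by
  apply le_antisymm
  · rw [Subgroup.closure_le]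
    rintro u (rfl | rfl)
    · exact ⟨⟨0, by show (0 : ZMod (p ^ β)) = _; rw [mul_zero]⟩, rfl⟩
    · rw [mdlB_pow]
      exact ⟨⟨1, by show ((p ^ (γ - δ) : ℕ) : ZMod (p ^ β)) = _; rw [mul_one]⟩, rfl⟩
  · rintro u ⟨⟨t, ht⟩, hz⟩
    have hrep : u = mdlA p α β γ δ ^ u.x.val * (mdlB p α β γ δ ^ p ^ (γ - δ)) ^ t.val := by
      rw [mdlA_pow, ← pow_mul, mdlB_pow, mdl_mul, Bc_zero_left]
      cases u with
      | mk ux uy uz =>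
          congr 1
          · simp [ZMod.natCast_rightInverse ux]
          · show uy = (0 : ZMod (p ^ β)) + ((p ^ (γ - δ) * t.val : ℕ) : ZMod (p ^ β))
            rw [zero_add, Nat.cast_mul, ZMod.natCast_rightInverse t]
            exact ht
          · rw [show uz = 0 from hz]; ring
    rw [hrep]
    exact mul_mem (pow_mem (Subgroup.subset_closure (by simp)) _)
      (pow_mem (Subgroup.subset_closure (by simp)) _)

def equivProd : Mdl p α β γ δ ≃ ZMod (p ^ α) × ZMod (p ^ β) × ZMod (p ^ γ) where
  toFun u := (u.x, u.y, u.z)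
  invFun w := ⟨w.1, w.2.1, w.2.2⟩
  left_inv u := rfl
  right_inv w := rfl

lemma card_Mdl : Nat.card (Mdl p α β γ δ) = p ^ α * (p ^ β * p ^ γ) := by
  rw [Nat.card_congr (equivProd p α β γ δ), Nat.card_prod, Nat.card_prod,
    Nat.card_zmod, Nat.card_zmod, Nat.card_zmod]

def equivK1 : (K1 p α β γ δ) ≃ ZMod (p ^ α) × ZMod (p ^ γ) where
  toFun u := (u.1.x, u.1.z)
  invFun w := ⟨⟨w.1, 0, w.2⟩, rfl⟩
  left_inv := by
    rintro ⟨⟨ux, uy, uz⟩, hu⟩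
    have : uy = 0 := hu
    subst this
    rfl
  right_inv w := rfl

def equivK2 : (K2 p α β γ δ) ≃ ZMod (p ^ β) × ZMod (p ^ γ) where
  toFun u := (u.1.y, u.1.z)
  invFun w := ⟨⟨0, w.1, w.2⟩, rfl⟩
  left_inv := by
    rintro ⟨⟨ux, uy, uz⟩, hu⟩
    have : ux = 0 := hu
    subst this
    rfl
  right_inv w := rfl

end


section

variable (p α β γ δ : ℕ) [Fact (γ ≤ δ + α)] [Fact (γ ≤ δ + β)] [NeZero p]
  [Fact (1 < p ^ α)] [Fact (1 < p ^ β)] [Fact (1 < p ^ γ)]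

def equivK3 (hδγ : δ ≤ γ) (hβ : γ - δ ≤ β) :
    (K3 p α β γ δ hδγ) ≃ ZMod (p ^ α) × ZMod (p ^ (β - (γ - δ))) where
  toFun u := (u.1.x, ((u.1.y.val / p ^ (γ - δ) : ℕ) : ZMod (p ^ (β - (γ - δ)))))
  invFun w := ⟨⟨w.1, ((p ^ (γ - δ) * w.2.val : ℕ) : ZMod (p ^ β)), 0⟩,
    ⟨⟨((w.2.val : ℕ) : ZMod (p ^ β)), by
      show ((p ^ (γ - δ) * w.2.val : ℕ) : ZMod (p ^ β)) = _
      rw [Nat.cast_mul]⟩, rfl⟩⟩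
  left_inv := by
    rintro ⟨⟨ux, uy, uz⟩, ⟨t, ht⟩, hz⟩
    have hz' : uz = 0 := hz
    have ht' : uy = ((p ^ (γ - δ) * t.val : ℕ) : ZMod (p ^ β)) := by
      rw [Nat.cast_mul, ZMod.natCast_rightInverse t]; exact ht
    have hval : uy.val = (p ^ (γ - δ) * t.val) % p ^ β := by
      rw [ht', ZMod.val_natCast]
    have hdvd : p ^ (γ - δ) ∣ uy.val := by
      rw [hval]
      exact (Nat.dvd_mod_iff (pow_dvd_pow p hβ)).2 ⟨t.val, rfl⟩
    apply Subtype.ext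
    show Mdl.mk _ _ _ = Mdl.mk ux uy uz
    congr 1
    · -- y component
      rw [ZMod.val_natCast,
        show p ^ (γ - δ) * (uy.val / p ^ (γ - δ) % p ^ (β - (γ - δ)))
          = (p ^ (γ - δ)) * ((uy.val / p ^ (γ - δ)) % p ^ (β - (γ - δ))) from rfl,
        cast_mul_mod _ _ _ (by
          rw [← pow_add, show γ - δ + (β - (γ - δ)) = β from by omega]),
        Nat.mul_div_cancel' hdvd, ZMod.natCast_rightInverse uy]
    · exact hz'.symm
  right_inv := by
    rintro ⟨wx, ws⟩
    have hP : 0 < p := Nat.pos_of_ne_zero (NeZero.ne p)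
    have hlt : p ^ (γ - δ) * ws.val < p ^ β := by
      have h1 : ws.val < p ^ (β - (γ - δ)) := ZMod.val_lt ws
      calc p ^ (γ - δ) * ws.val < p ^ (γ - δ) * p ^ (β - (γ - δ)) :=
            Nat.mul_lt_mul_of_pos_left h1 (by positivity)
        _ = p ^ β := by rw [← pow_add]; congr 1; omega
    show (wx, _) = (wx, ws)
    congr 1
    rw [ZMod.val_natCast, Nat.mod_eq_of_lt hlt,
      Nat.mul_div_cancel_left _ (pow_pos hP _),
      ZMod.natCast_rightInverse ws]

lemma card_K1 : Nat.card (K1 p α β γ δ) = p ^ α * p ^ γ := by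
  rw [Nat.card_congr (equivK1 p α β γ δ), Nat.card_prod, Nat.card_zmod, Nat.card_zmod]

lemma card_K2 : Nat.card (K2 p α β γ δ) = p ^ β * p ^ γ := by
  rw [Nat.card_congr (equivK2 p α β γ δ), Nat.card_prod, Nat.card_zmod, Nat.card_zmod]

lemma card_K3 (hδγ : δ ≤ γ) (hβ : γ - δ ≤ β) :
    Nat.card (K3 p α β γ δ hδγ) = p ^ α * p ^ (β - (γ - δ)) := by
  rw [Nat.card_congr (equivK3 p α β γ δ hδγ hβ), Nat.card_prod, Nat.card_zmod,
    Nat.card_zmod]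

lemma ppos : 0 < p := Nat.pos_of_ne_zero (NeZero.ne p)

lemma index_K1 : (K1 p α β γ δ).index = p ^ β := by
  have h := Subgroup.card_mul_index (K1 p α β γ δ)
  rw [card_K1, card_Mdl] at h
  have hpos : 0 < p ^ α * p ^ γ := by
    have := ppos p; positivity
  apply Nat.eq_of_mul_eq_mul_left hpos
  rw [show p ^ α * p ^ γ * ((K1 p α β γ δ).index) = p ^ α * p ^ γ * (K1 p α β γ δ).index
    from rfl, h]
  ring

lemma index_K2 : (K2 p α β γ δ).index = p ^ α := by
  have h := Subgroup.card_mul_index (K2 p α β γ δ)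
  rw [card_K2, card_Mdl] at h
  have hpos : 0 < p ^ β * p ^ γ := by
    have := ppos p; positivity
  apply Nat.eq_of_mul_eq_mul_left hpos
  rw [h]
  ring

lemma index_K3 (hδγ : δ ≤ γ) (hβ : γ - δ ≤ β) :
    (K3 p α β γ δ hδγ).index = p ^ (2 * γ - δ) := by
  have h := Subgroup.card_mul_index (K3 p α β γ δ hδγ)
  rw [card_K3 p α β γ δ hδγ hβ, card_Mdl] at h
  have hpos : 0 < p ^ α * p ^ (β - (γ - δ)) := by
    have := ppos p; positivity
  apply Nat.eq_of_mul_eq_mul_left hpos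
  rw [h]
  simp only [← pow_add]
  congr 1
  omega

lemma inter_bot (hδγ : δ ≤ γ) :
    K1 p α β γ δ ⊓ K2 p α β γ δ ⊓ K3 p α β γ δ hδγ = ⊥ := by
  rw [eq_bot_iff]
  rintro u ⟨⟨hu1, hu2⟩, ⟨t, ht⟩, hu3⟩
  have h1 : u.y = 0 := hu1
  have h2 : u.x = 0 := hu2
  have h3 : u.z = 0 := hu3
  rw [Subgroup.mem_bot]
  cases u with
  | mk ux uy uz =>
      show Mdl.mk ux uy uz = Mdl.mk 0 0 0
      rw [show ux = 0 from h2, show uy = 0 from h1, show uz = 0 from h3]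

end

end GGaux

/-- For `G = G(α,β,γ,δ)` and `ε = max {α, β, 2γ − δ}`, the subgroups `⟨a, c⟩`, `⟨b, c⟩` and
`⟨a, b^{p^{γ−δ}}⟩` each have index dividing `p ^ ε`, and their intersection is trivial. -/
theorem GG_subgroups_index_and_trivial_intersection
    (p : ℕ) (hp : p.Prime) (α β γ δ : ℕ)
    (hα : 0 < α) (hβ : 0 < β) (hγ : 0 < γ) (hδ : 0 < δ)
    (h1 : δ ≤ γ) (h2 : γ - δ ≤ min α β) :
    (Subgroup.closure {ga p α β γ δ, gc p α β γ δ}).index ∣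
        p ^ max α (max β (2 * γ - δ)) ∧
    (Subgroup.closure {gb p α β γ δ, gc p α β γ δ}).index ∣
        p ^ max α (max β (2 * γ - δ)) ∧
    (Subgroup.closure {ga p α β γ δ, gb p α β γ δ ^ p ^ (γ - δ)}).index ∣
        p ^ max α (max β (2 * γ - δ)) ∧
    Subgroup.closure {ga p α β γ δ, gc p α β γ δ} ⊓
        Subgroup.closure {gb p α β γ δ, gc p α β γ δ} ⊓
        Subgroup.closure {ga p α β γ δ, gb p α β γ δ ^ p ^ (γ - δ)} = ⊥ := by
  haveI : NeZero p := ⟨hp.ne_zero⟩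
  haveI : Fact (γ ≤ δ + α) := ⟨by omega⟩
  haveI : Fact (γ ≤ δ + β) := ⟨by omega⟩
  haveI : Fact (1 < p ^ α) := ⟨Nat.one_lt_pow (by omega) hp.one_lt⟩
  haveI : Fact (1 < p ^ β) := ⟨Nat.one_lt_pow (by omega) hp.one_lt⟩
  haveI : Fact (1 < p ^ γ) := ⟨Nat.one_lt_pow (by omega) hp.one_lt⟩
  have hβ' : γ - δ ≤ β := by omega
  set E := GGaux.eqv p α β γ δ with hE
  have hinj : Function.Injective E.toMonoidHom := E.injective
  have hEa : E.toMonoidHom (ga p α β γ δ) = GGaux.mdlA p α β γ δ := GGaux.φGG_a p α β γ δ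
  have hEb : E.toMonoidHom (gb p α β γ δ) = GGaux.mdlB p α β γ δ := GGaux.φGG_b p α β γ δ
  have hEc : E.toMonoidHom (gc p α β γ δ) = GGaux.mdlC p α β γ δ := GGaux.φGG_c p α β γ δ
  have hEd : E.toMonoidHom (gb p α β γ δ ^ p ^ (γ - δ))
      = GGaux.mdlB p α β γ δ ^ p ^ (γ - δ) := by rw [map_pow, hEb]
  have hm1 : (Subgroup.closure {ga p α β γ δ, gc p α β γ δ}).map E.toMonoidHom
      = GGaux.K1 p α β γ δ := by
    rw [MonoidHom.map_closure, Set.image_insert_eq, Set.image_singleton, hEa, hEc,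
      GGaux.closure_AC]
  have hm2 : (Subgroup.closure {gb p α β γ δ, gc p α β γ δ}).map E.toMonoidHom
      = GGaux.K2 p α β γ δ := by
    rw [MonoidHom.map_closure, Set.image_insert_eq, Set.image_singleton, hEb, hEc,
      GGaux.closure_BC]
  have hm3 : (Subgroup.closure {ga p α β γ δ, gb p α β γ δ ^ p ^ (γ - δ)}).map E.toMonoidHom
      = GGaux.K3 p α β γ δ h1 := by
    rw [MonoidHom.map_closure, Set.image_insert_eq, Set.image_singleton, hEa, hEd,
      GGaux.closure_AD]
  have key : ∀ (H : Subgroup (GG p α β γ δ)) (K : Subgroup (GGaux.Mdl p α β γ δ)),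
      H.map E.toMonoidHom = K → H.index = K.index := by
    intro H K hK
    have hcm := Subgroup.comap_map_eq_self_of_injective (f := E.toMonoidHom) hinj H
    rw [hK] at hcm
    rw [← hcm]
    exact Subgroup.index_comap_of_surjective _ E.surjective
  refine ⟨?_, ?_, ?_, ?_⟩
  · rw [key _ _ hm1, GGaux.index_K1]
    exact pow_dvd_pow p (le_trans (le_max_left β _) (le_max_right α _))
  · rw [key _ _ hm2, GGaux.index_K2]
    exact pow_dvd_pow p (le_max_left α _)
  · rw [key _ _ hm3, GGaux.index_K3 p α β γ δ h1 hβ']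
    exact pow_dvd_pow p (le_trans (le_max_right β _) (le_max_right α _))
  · have hb := GGaux.inter_bot p α β γ δ h1
    rw [← hm1, ← hm2, ← hm3, ← Subgroup.map_inf _ _ _ hinj, ← Subgroup.map_inf _ _ _ hinj]
      at hb
    exact (Subgroup.map_eq_bot_iff_of_injective _ hinj).1 hb
end
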